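/- arXiv:2006.05960 — 2 statements merged into one kernel-verified Lean document; each statement's English description precedes it below -/
import Mathlib

section
/- Consider the semi-discrete finite volume scheme dU_i/dt = −(F_{i+1/2} − F_{i−1/2})/Δx + S_i with a consistent numerical flux F_{i+1/2} = 𝓕(W_{i+1/2−}, W_{i+1/2+}) (where 𝓕(W, W) = f(W)), and suppose the reconstruction yields identical interface traces W_{i+1/2−} = W_{i+1/2+} = W_{i+1/2} at每 interface, and the source term is discretized as S_i^{(ρv)} = (f^{(ρv)}(W_{i+1/2}) − f^{(ρv)}(W_{i−1/2}))/Δx, S_i^{(E)} = (f^{(E)}(W_{i+1/2}) − f^{(E)}(W_{i−1/2}))/Δx and S_i^{(ρ)} = 0. If additionally f^{(ρ)}(W_{i+1/2}) is independent of i (constant mass flux at interfaces), then dU_i/dt = 0 for all i. -/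
/-- Well-balanced property of the semi-discrete finite volume scheme: if a
consistent numerical flux receives identical traces `W_{i+1/2−} = W_{i+1/2+} =
W_{i+1/2}` at each interface, the source term is discretized in flux-difference
form (momentum and energy components), and the mass flux `f^{(ρ)}(W_{i+1/2})`
is the same at all interfaces, then the scheme's right-hand side vanishes:
`dU_i/dt = 0` for all cells `i`. -/
theorem well_balanced_scheme_steady
    (f : (Fin 3 → ℝ) → (Fin 3 → ℝ))
    (𝓕 : (Fin 3 → ℝ) → (Fin 3 → ℝ) → (Fin 3 → ℝ))
    (hcons : ∀ W, 𝓕 W W = f W)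
    (W : ℤ → (Fin 3 → ℝ))  -- `W i` is the interface state `W_{i+1/2}`
    (Δx : ℝ) (hΔx : 0 < Δx)
    (S : ℤ → (Fin 3 → ℝ))
    (hS0 : ∀ i, S i 0 = 0)
    (hS1 : ∀ i, S i 1 = (f (W i) 1 - f (W (i - 1)) 1) / Δx)
    (hS2 : ∀ i, S i 2 = (f (W i) 2 - f (W (i - 1)) 2) / Δx)
    (hmass : ∀ i j : ℤ, f (W i) 0 = f (W j) 0)
    (L : ℤ → (Fin 3 → ℝ))
    (hL : ∀ i, L i = -(Δx)⁻¹ • (𝓕 (W i) (W i) - 𝓕 (W (i - 1)) (W (i - 1))) + S i) :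
    ∀ i, L i = 0 := by
  intro i
  funext k
  have h := hL i
  have hne : Δx ≠ 0 := ne_of_gt hΔx
  fin_cases k <;>
    simp only [h, hcons, Pi.add_apply, Pi.smul_apply, Pi.sub_apply, Pi.zero_apply,
      smul_eq_mul]
  · show -Δx⁻¹ * (f (W i) 0 - f (W (i - 1)) 0) + S i 0 = 0
    rw [hS0 i, hmass i (i - 1)]; ring
  · show -Δx⁻¹ * (f (W i) 1 - f (W (i - 1)) 1) + S i 1 = 0
    rw [hS1 i]; field_simp; ring
  · show -Δx⁻¹ * (f (W i) 2 - f (W (i - 1)) 2) + S i 2 = 0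
    rw [hS2 i]; field_simp; ring
end

section
/- For the steady adiabatic flow ODE defined implicitly by e(ρ(x)) = B₀ − φ(x) on the subsonic branch (ρ > ρ*), with φ continuously differentiable and B₀ − φ(x) > e* on an interval I, the implicit function theorem gives a unique C¹ solution ρ : I → (ρ*, ∞), and it satisfies ρ'(x) = −φ'(x)/e'(ρ(x)) with e'(ρ) = c²(ρ)/ρ − m₀²/ρ³ > 0. -/
open Set Filter


/-- On the subsonic branch, the implicit equation `e(ρ(x)) = B₀ − φ(x)` with
`φ ∈ C¹` and `B₀ − φ(x) > e*` on an open interval `I` defines a unique function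
`ρ : I → (ρ*, ∞)`, which is differentiable with
`ρ'(x) = −φ'(x)/e'(ρ(x))`, where `e'(ρ) = c²(ρ)/ρ − m₀²/ρ³ > 0` on `(ρ*, ∞)`. -/
theorem subsonic_implicit_equilibrium
    (K γ m₀ B₀ : ℝ) (hK : 0 < K) (hγ : 1 < γ) (hm : m₀ ≠ 0)
    (e : ℝ → ℝ) (he : ∀ ρ, e ρ = m₀ ^ 2 / (2 * ρ ^ 2) + γ / (γ - 1) * K * ρ ^ (γ - 1))
    (e' : ℝ → ℝ) (he' : ∀ ρ, e' ρ = (γ * K * ρ ^ (γ - 1)) / ρ - m₀ ^ 2 / ρ ^ 3)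
    (ρs : ℝ) (hρs : ρs = (m₀ ^ 2 / (γ * K)) ^ (1 / (γ + 1)))
    (I : Set ℝ) (hI : IsOpen I)
    (φ φ' : ℝ → ℝ)
    (hφ : ∀ x ∈ I, HasDerivAt φ (φ' x) x)
    (hφcont : ContinuousOn φ' I)
    (hlevel : ∀ x ∈ I, e ρs < B₀ - φ x) :
    (∀ ρ ∈ Set.Ioi ρs, 0 < e' ρ) ∧
    ∃ ρ : ℝ → ℝ,
      (∀ x ∈ I, ρs < ρ x ∧ e (ρ x) = B₀ - φ x) ∧
      (∀ x ∈ I, HasDerivAt ρ (-φ' x / e' (ρ x)) x) ∧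
      (∀ σ : ℝ → ℝ, (∀ x ∈ I, ρs < σ x ∧ e (σ x) = B₀ - φ x) →
        ∀ x ∈ I, σ x = ρ x) := by
  classical
  have hγ0 : 0 < γ := lt_trans one_pos hγ
  have hγK : 0 < γ * K := mul_pos hγ0 hK
  have hγ1 : (0:ℝ) < γ - 1 := by linarith
  have hγ1' : γ - 1 ≠ 0 := ne_of_gt hγ1
  have hγp1 : (0:ℝ) < γ + 1 := by linarith
  have hm2 : 0 < m₀ ^ 2 := pow_pos (abs_pos.mpr hm) 2 |>.trans_eq (sq_abs m₀)
  have hbase : 0 < m₀ ^ 2 / (γ * K) := div_pos hm2 hγK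
  have hρs0 : 0 < ρs := by
    rw [hρs]; exact Real.rpow_pos_of_pos hbase _
  have hρspow : ρs ^ (γ + 1) = m₀ ^ 2 / (γ * K) := by
    rw [hρs, ← Real.rpow_mul (le_of_lt hbase), one_div_mul_cancel (ne_of_gt hγp1),
      Real.rpow_one]
  -- derivative of e at positive points
  have heDeriv : ∀ ρ : ℝ, 0 < ρ → HasDerivAt e (e' ρ) ρ := by
    intro r hr
    have h1 : HasDerivAt (fun x : ℝ => x ^ 2) (2 * r) r := by
      simpa using hasDerivAt_pow 2 r
    have hr2 : (r:ℝ) ^ 2 ≠ 0 := pow_ne_zero 2 (ne_of_gt hr)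
    have h1' : HasDerivAt (fun x : ℝ => m₀ ^ 2 / (2 * x ^ 2))
        (m₀ ^ 2 / 2 * (-(2 * r) / (r ^ 2) ^ 2)) r := by
      have h := (h1.inv hr2).const_mul (m₀ ^ 2 / 2)
      have hfun : (fun x : ℝ => m₀ ^ 2 / (2 * x ^ 2))
          = fun x : ℝ => m₀ ^ 2 / 2 * (x ^ 2)⁻¹ := by funext x; ring
      rw [hfun]
      exact h
    have h2 : HasDerivAt (fun x : ℝ => γ / (γ - 1) * K * x ^ (γ - 1))
        (γ / (γ - 1) * K * ((γ - 1) * r ^ (γ - 1 - 1))) r :=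
      (Real.hasDerivAt_rpow_const (Or.inl (ne_of_gt hr))).const_mul _
    have hsum := h1'.add h2
    have heq : (fun x : ℝ => m₀ ^ 2 / (2 * x ^ 2) + γ / (γ - 1) * K * x ^ (γ - 1)) = e := by
      funext x; rw [he]
    rw [show ((fun x : ℝ => m₀ ^ 2 / (2 * x ^ 2)) + fun x : ℝ => γ / (γ - 1) * K * x ^ (γ - 1)) = e from heq] at hsum
    refine hsum.congr_deriv ?_
    rw [he']
    have hsub : r ^ (γ - 1 - 1) = r ^ (γ - 1) / r := by
      rw [Real.rpow_sub hr, Real.rpow_one]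
    rw [hsub]
    field_simp
    ring
  -- positivity of e' on the subsonic branch
  have hpos : ∀ r ∈ Set.Ioi ρs, 0 < e' r := by
    intro r hr
    have hrρs : ρs < r := hr
    have hr0 : 0 < r := lt_trans hρs0 hrρs
    have hkey : m₀ ^ 2 < γ * K * r ^ (γ + 1) := by
      have : ρs ^ (γ + 1) < r ^ (γ + 1) :=
        Real.rpow_lt_rpow (le_of_lt hρs0) hrρs hγp1
      rw [hρspow] at this
      calc m₀ ^ 2 = γ * K * (m₀ ^ 2 / (γ * K)) := by field_simp
        _ < γ * K * r ^ (γ + 1) := by exact (mul_lt_mul_iff_right₀ hγK).mpr this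
    have hsplit : r ^ (γ + 1) = r ^ (γ - 1) * r ^ 2 := by
      rw [← Real.rpow_natCast r 2, ← Real.rpow_add hr0]
      norm_num
      ring_nf
    have hform : e' r = (γ * K * r ^ (γ + 1) - m₀ ^ 2) / r ^ 3 := by
      rw [he', hsplit]
      field_simp
    rw [hform]
    exact div_pos (by linarith) (pow_pos hr0 3)
  refine ⟨hpos, ?_⟩
  -- continuity of e on positives, strict monotonicity on Ici ρs
  have hecont : ∀ r : ℝ, 0 < r → ContinuousAt e r := fun r hr =>
    (heDeriv r hr).continuousAt
  have hmono : StrictMonoOn e (Set.Ici ρs) := by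
    apply strictMonoOn_of_deriv_pos (convex_Ici ρs)
    · intro x hx
      exact (hecont x (lt_of_lt_of_le hρs0 hx)).continuousWithinAt
    · intro x hx
      rw [interior_Ici] at hx
      rw [(heDeriv x (lt_trans hρs0 hx)).deriv]
      exact hpos x hx
  -- e tends to atTop
  have hetop : Tendsto e atTop atTop := by
    have h1 : Tendsto (fun x : ℝ => m₀ ^ 2 / (2 * x ^ 2)) atTop (nhds 0) := by
      apply Tendsto.div_atTop tendsto_const_nhds
      exact (tendsto_pow_atTop (by norm_num)).const_mul_atTop two_pos
    have h2 : Tendsto (fun x : ℝ => γ / (γ - 1) * K * x ^ (γ - 1)) atTop atTop := by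
      have := tendsto_rpow_atTop hγ1
      exact this.const_mul_atTop (by positivity)
    have := h1.add_atTop h2
    refine this.congr fun x => (he x).symm
  -- existence of roots beyond ρs
  have hex : ∀ y : ℝ, e ρs < y → ∃ r, ρs < r ∧ e r = y := by
    intro y hy
    obtain ⟨M, hM1, hM2⟩ := ((hetop.eventually_ge_atTop y).and (eventually_ge_atTop ρs)).exists
    have hcontIcc : ContinuousOn e (Set.Icc ρs M) := fun x hx =>
      (hecont x (lt_of_lt_of_le hρs0 hx.1)).continuousWithinAt
    have hsub := intermediate_value_Icc hM2 hcontIcc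
    obtain ⟨c, hc, hcy⟩ := hsub ⟨le_of_lt hy, hM1⟩
    refine ⟨c, ?_, hcy⟩
    rcases eq_or_lt_of_le hc.1 with h | h
    · exfalso; rw [← h] at hcy; exact absurd hcy (ne_of_lt hy)
    · exact h
  -- uniqueness of roots
  have huniq : ∀ r₁ r₂, ρs < r₁ → ρs < r₂ → e r₁ = e r₂ → r₁ = r₂ := by
    intro r₁ r₂ h1 h2 h12
    exact hmono.injOn (le_of_lt h1) (le_of_lt h2) h12
  -- the inverse function
  set g : ℝ → ℝ := fun y => if h : ∃ r, ρs < r ∧ e r = y then h.choose else ρs + 1 with hg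
  have hgspec : ∀ y : ℝ, e ρs < y → ρs < g y ∧ e (g y) = y := by
    intro y hy
    have h : ∃ r, ρs < r ∧ e r = y := hex y hy
    simp only [hg, dif_pos h]
    exact h.choose_spec
  have hginv : ∀ r, ρs < r → g (e r) = r := by
    intro r hr
    have her : e ρs < e r := hmono self_mem_Ici (le_of_lt hr) hr
    obtain ⟨h1, h2⟩ := hgspec (e r) her
    exact huniq _ _ h1 hr h2
  have hgmono : StrictMonoOn g (Set.Ioi (e ρs)) := by
    intro y₁ hy₁ y₂ hy₂ hlt
    by_contra hle
    push_neg at hle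
    have := hmono.monotoneOn (le_of_lt (hgspec y₂ hy₂).1) (le_of_lt (hgspec y₁ hy₁).1) hle
    rw [(hgspec y₁ hy₁).2, (hgspec y₂ hy₂).2] at this
    exact absurd this (not_le.mpr hlt)
  have hgimg : g '' Set.Ioi (e ρs) = Set.Ioi ρs := by
    apply Set.Subset.antisymm
    · rintro _ ⟨y, hy, rfl⟩
      exact (hgspec y hy).1
    · intro r hr
      exact ⟨e r, hmono self_mem_Ici (Set.mem_Ici.mpr (le_of_lt (Set.mem_Ioi.mp hr))) hr, hginv r hr⟩
  have hgcont : ∀ y ∈ Set.Ioi (e ρs), ContinuousAt g y := by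
    intro y hy
    apply hgmono.continuousAt_of_image_mem_nhds (isOpen_Ioi.mem_nhds hy)
    rw [hgimg]
    exact isOpen_Ioi.mem_nhds (hgspec y hy).1
  have hgderiv : ∀ y ∈ Set.Ioi (e ρs), HasDerivAt g (e' (g y))⁻¹ y := by
    intro y hy
    have hgy := hgspec y hy
    refine HasDerivAt.of_local_left_inverse (hgcont y hy)
      (heDeriv _ (lt_trans hρs0 hgy.1)) (ne_of_gt (hpos _ hgy.1)) ?_
    filter_upwards [isOpen_Ioi.mem_nhds hy] with z hz
    exact (hgspec z hz).2
  -- the solution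
  refine ⟨fun x => g (B₀ - φ x), ?_, ?_, ?_⟩
  · intro x hx
    exact hgspec _ (hlevel x hx)
  · intro x hx
    have hu : HasDerivAt (fun x => B₀ - φ x) (-φ' x) x := by
      exact (hφ x hx).const_sub B₀
    have := (hgderiv _ (hlevel x hx)).comp x hu
    rw [div_eq_inv_mul]
    exact this
  · intro σ hσ x hx
    obtain ⟨h1, h2⟩ := hσ x hx
    obtain ⟨h3, h4⟩ := hgspec _ (hlevel x hx)
    exact huniq _ _ h1 h3 (h2.trans h4.symm)
end
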